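/- arXiv:1806.11388 — 3 statements merged into one kernel-verified Lean document; each statement's English description precedes it below -/
import Mathlib

section
/- (SMLE Consistency, Theorem 1, full K-step version.) Let (Ω, 𝓕, P) be a probability space and K ≥ 2 an integer. For k = 1, …, K let p_k be a positive integer, and for k = 2, …, K let q_k be a positive integer and π_k : ℝ^{p_1} × ⋯ × ℝ^{p_{k−1}} → ℝ^{q_k} a continuous linear map (a coordinate projection selecting the nuisance parameters from earlier primary-parameter blocks). Fix true values θ_k* ∈ ℝ^{p_k} for each k, and set η_k* = π_k(θ_1*, …, θ_{k−1}*) for k ≥ 2. Let θ̂_1 : ℕ → Ω → ℝ^{p_1} be measurable, and for k = 2, …, K let θ̂_k : ℕ → Ω × ℝ^{q_k} → ℝ^{p_k} be jointly measurable. For a multi-index n = (n_1, …, n_K) ∈ ℕ^K, define recursively η̂_2(n, ω) = π_2(θ̂_1(n_1, ω)) and, for k ≥ 3, η̂_k(n, ω) = π_k(θ̂_1(n_1, ω), θ̂_2(n_2, ω, η̂_2(n, ω)), …, θ̂_{k−1}(n_{k−1}, ω, η̂_{k−1}(n, ω))). Assume: (i) θ̂_1(n_1, ·) converges in probability to θ_1*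 along the filter atTop in n_1; (ii) for each k ∈ {2, …, K}, θ̂_k(n_k, ·, η_k*) converges in probability to θ_k* along atTop in n_k; (iii) for each k ∈ {2, …, K} there exist n_{k0} ∈ ℕ, δ_k > 0 and B_k ≥ 0 such that for every n_k > n_{k0}, for P-almost every ω, the map η ↦ θ̂_k(n_k, ω, η) is Fréchet differentiable at every point of the open ball of radius δ_k centered at η_k*, with derivative of operator norm at most B_k on that ball. Then for every k ∈ {2, …, K}, the plug-in estimator (n, ω) ↦ θ̂_k(n_k, ω, η̂_k(n, ω)) converges in probability to θ_k* along the product filter atTop ×ˢ ⋯ ×ˢ atTop on ℕ^k (i.e., as n_1, …, n_k → ∞ jointly). -/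
open MeasureTheory Filter

/-- The stepwise (plug-in) estimators of the SMLE procedure.  Step `0` estimates the
first primary-parameter block; step `k+1` plugs the nuisance-parameter estimate
`η̂_{k+1} = π_{k+1}(θ̂₀, …, θ̂ₖ)`, built from the estimates of earlier blocks, into the
`(k+1)`-st estimator. -/
noncomputable def smleEstimator {Ω : Type*} (p q : ℕ → ℕ)
    (π : (k : ℕ) → ((i : Fin k) → EuclideanSpace ℝ (Fin (p i))) →L[ℝ]
      EuclideanSpace ℝ (Fin (q k)))
    (θhat0 : ℕ → Ω → EuclideanSpace ℝ (Fin (p 0)))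
    (θhat : (k : ℕ) → ℕ → Ω × EuclideanSpace ℝ (Fin (q k)) → EuclideanSpace ℝ (Fin (p k))) :
    (k : ℕ) → (ℕ → ℕ) → Ω → EuclideanSpace ℝ (Fin (p k))
  | 0, n, ω => θhat0 (n 0) ω
  | (k + 1), n, ω => θhat (k + 1) (n (k + 1))
      (ω, π (k + 1) (fun i => smleEstimator p q π θhat0 θhat i n ω))
  termination_by k => k
  decreasing_by exact i.isLt

section Aux

lemma my_tendsto_measure_zero_of_subset {α ι : Type*} [MeasurableSpace α] {μ : Measure α}
    {s t : ι → Set α} {l : Filter ι} (hsub : ∀ᶠ n in l, s n ⊆ t n)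
    (ht : Tendsto (fun n => μ (t n)) l (nhds 0)) : Tendsto (fun n => μ (s n)) l (nhds 0) := by
  refine tendsto_of_tendsto_of_tendsto_of_le_of_le' tendsto_const_nhds ht
    (Eventually.of_forall fun n => zero_le) (hsub.mono fun n h => measure_mono h)

lemma my_tendstoInMeasure_comp {α ι ι' E : Type*} [MeasurableSpace α] {μ : Measure α}
    [EDist E] {f : ι → α → E} {l : Filter ι} {c : α → E} {u : ι' → ι} {l' : Filter ι'}
    (hf : TendstoInMeasure μ f l c) (hu : Tendsto u l' l) :
    TendstoInMeasure μ (fun i => f (u i)) l' c :=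
  fun ε hε => (hf ε hε).comp hu

lemma my_tendstoInMeasure_congr {α ι E : Type*} [MeasurableSpace α] {μ : Measure α}
    [EDist E] {f g : ι → α → E} {l : Filter ι} {c : α → E}
    (h : ∀ n ω, f n ω = g n ω) (hf : TendstoInMeasure μ f l c) :
    TendstoInMeasure μ g l c := by
  intro ε hε
  have he : (fun i => μ {x | ε ≤ edist (g i x) (c x)})
      = fun i => μ {x | ε ≤ edist (f i x) (c x)} := by
    funext i; congr 1; ext x; simp only [Set.mem_setOf_eq, h]
  rw [he]; exact hf ε hε

lemma my_tendstoInMeasure_pi {α ι : Type*} [MeasurableSpace α] {μ : Measure α}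
    {k : ℕ} {E : Fin k → Type*} [∀ i, PseudoMetricSpace (E i)]
    {f : (i : Fin k) → ι → α → E i} {l : Filter ι} {c : (i : Fin k) → E i}
    (hf : ∀ i, TendstoInMeasure μ (f i) l (fun _ => c i)) :
    TendstoInMeasure μ (fun n ω => (fun i => f i n ω : ∀ i, E i)) l (fun _ => c) := by
  rw [tendstoInMeasure_iff_dist]
  intro ε hε
  refine my_tendsto_measure_zero_of_subset (t := fun n => ⋃ i, {ω | ε ≤ dist (f i n ω) (c i)})
    (Eventually.of_forall fun n ω hω => ?_) ?_
  · simp only [Set.mem_setOf_eq, Set.mem_iUnion] at hω ⊢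
    by_contra h
    push_neg at h
    exact absurd ((dist_pi_lt_iff hε).2 h) (not_lt.2 hω)
  · refine tendsto_of_tendsto_of_tendsto_of_le_of_le' tendsto_const_nhds
      (h := fun n => ∑ i, μ {ω | ε ≤ dist (f i n ω) (c i)}) ?_
      (Eventually.of_forall fun n => zero_le)
      (Eventually.of_forall fun n => measure_iUnion_fintype_le _ _)
    simpa using tendsto_finset_sum Finset.univ (fun i _ => tendstoInMeasure_iff_dist.1 (hf i) ε hε)

lemma my_tendstoInMeasure_clm {α ι E F : Type*} [MeasurableSpace α] {μ : Measure α}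
    [NormedAddCommGroup E] [NormedSpace ℝ E] [NormedAddCommGroup F] [NormedSpace ℝ F]
    {f : ι → α → E} {l : Filter ι} {c : E} (φ : E →L[ℝ] F)
    (hf : TendstoInMeasure μ f l (fun _ => c)) :
    TendstoInMeasure μ (fun n ω => φ (f n ω)) l (fun _ => φ c) := by
  rw [tendstoInMeasure_iff_dist]
  intro ε hε
  have hpos : 0 < ε / (‖φ‖ + 1) := div_pos hε (by positivity)
  refine my_tendsto_measure_zero_of_subset
    (t := fun n => {ω | ε / (‖φ‖ + 1) ≤ dist (f n ω) c})
    (Eventually.of_forall fun n ω hω => ?_) (tendstoInMeasure_iff_dist.1 hf _ hpos)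
  simp only [Set.mem_setOf_eq] at hω ⊢
  by_contra h
  push_neg at h
  have h1 : dist (φ (f n ω)) (φ c) ≤ ‖φ‖ * dist (f n ω) c := by
    simpa [dist_eq_norm, ← map_sub] using φ.le_opNorm (f n ω - c)
  have h2 : ‖φ‖ * dist (f n ω) c < ε := by
    calc ‖φ‖ * dist (f n ω) c ≤ (‖φ‖ + 1) * dist (f n ω) c := by
          have := dist_nonneg (x := f n ω) (y := c); nlinarith
      _ < (‖φ‖ + 1) * (ε / (‖φ‖ + 1)) := mul_lt_mul_of_pos_left h (by positivity)
      _ = ε := by field_simp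
  exact absurd (lt_of_le_of_lt h1 h2) (not_lt.2 hω)

lemma smleEstimator_zero {Ω : Type*} (p q) (π) (θhat0 : ℕ → Ω → _) (θhat) (n : ℕ → ℕ) (ω : Ω) :
    smleEstimator p q π θhat0 θhat 0 n ω = θhat0 (n 0) ω := by
  rw [smleEstimator]

lemma smleEstimator_succ {Ω : Type*} (p q) (π) (θhat0 : ℕ → Ω → _) (θhat) (k : ℕ) (n : ℕ → ℕ)
    (ω : Ω) :
    smleEstimator p q π θhat0 θhat (k+1) n ω = θhat (k + 1) (n (k + 1))
      (ω, π (k + 1) (fun i => smleEstimator p q π θhat0 θhat i n ω)) := by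
  rw [smleEstimator]

lemma smleEstimator_congr {Ω : Type*} (p q) (π) (θhat0 : ℕ → Ω → _) (θhat) :
    ∀ (k : ℕ) (m n : ℕ → ℕ) (ω : Ω), (∀ i, i ≤ k → m i = n i) →
      smleEstimator p q π θhat0 θhat k m ω = smleEstimator p q π θhat0 θhat k n ω := by
  intro k
  induction k using Nat.strong_induction_on with
  | _ k IH =>
    match k with
    | 0 => intro m n ω h; rw [smleEstimator_zero, smleEstimator_zero, h 0 le_rfl]
    | k+1 =>
      intro m n ω h
      rw [smleEstimator_succ, smleEstimator_succ, h (k+1) le_rfl,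
        show (fun i : Fin (k+1) => smleEstimator p q π θhat0 θhat i m ω)
            = (fun i : Fin (k+1) => smleEstimator p q π θhat0 θhat i n ω) from
          funext fun i => IH i i.isLt m n ω fun j hj =>
            h j (le_trans hj (le_trans (Nat.le_of_lt_succ i.isLt) (Nat.le_succ k)))]

end Aux

/-- **SMLE consistency** (Theorem 1, full `K`-step version).  Blocks are indexed by
`k = 0, …, K-1` (so the paper's step `k ∈ {1, …, K}` is `k-1` here).  If the first-step
estimator is consistent, each later-step estimator is consistent when evaluated at the
true nuisance parameters `η_k* = π_k(θ₀*, …, θ_{k-1}*)`, and each later-step estimator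
is a.s. differentiable in the nuisance parameters with uniformly bounded derivative near
`η_k*` for all large sample sizes, then every plug-in estimator of the stepwise
procedure is consistent as `n₀, …, n_k → ∞` jointly. -/
theorem smle_consistency
    {Ω : Type*} [MeasurableSpace Ω] (P : Measure Ω) [IsProbabilityMeasure P]
    (K : ℕ) (hK : 2 ≤ K)
    (p q : ℕ → ℕ) (hp : ∀ k, k < K → 0 < p k) (hq : ∀ k, 1 ≤ k → k < K → 0 < q k)
    (π : (k : ℕ) → ((i : Fin k) → EuclideanSpace ℝ (Fin (p i))) →L[ℝ]
      EuclideanSpace ℝ (Fin (q k)))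
    (θstar : (k : ℕ) → EuclideanSpace ℝ (Fin (p k)))
    (θhat0 : ℕ → Ω → EuclideanSpace ℝ (Fin (p 0)))
    (θhat : (k : ℕ) → ℕ → Ω × EuclideanSpace ℝ (Fin (q k)) → EuclideanSpace ℝ (Fin (p k)))
    (hmeas0 : ∀ n, Measurable (θhat0 n))
    (hmeas : ∀ k n, Measurable (θhat k n))
    (h1 : TendstoInMeasure P (fun n ω => θhat0 n ω) atTop (fun _ => θstar 0))
    (h2 : ∀ k, 1 ≤ k → k < K →
      TendstoInMeasure P (fun n ω => θhat k n (ω, π k (fun i => θstar i)))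
        atTop (fun _ => θstar k))
    (h3 : ∀ k, 1 ≤ k → k < K → ∃ n₀ : ℕ, ∃ δ > (0 : ℝ), ∃ B : ℝ, 0 ≤ B ∧ ∀ n > n₀,
      ∀ᵐ ω ∂P, ∀ η ∈ Metric.ball (π k (fun i => θstar i)) δ,
        ∃ D : EuclideanSpace ℝ (Fin (q k)) →L[ℝ] EuclideanSpace ℝ (Fin (p k)),
          HasFDerivAt (fun η' => θhat k n (ω, η')) D η ∧ ‖D‖ ≤ B) :
    ∀ k, 1 ≤ k → k < K →
      TendstoInMeasure P
        (fun (n : Fin (k + 1) → ℕ) ω =>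
          smleEstimator p q π θhat0 θhat k
            (fun i => if h : i < k + 1 then n ⟨i, h⟩ else 0) ω)
        (Filter.pi fun _ => atTop) (fun _ => θstar k) := by
  suffices H : ∀ k, k < K →
      TendstoInMeasure P
        (fun (n : Fin (k + 1) → ℕ) ω =>
          smleEstimator p q π θhat0 θhat k
            (fun i => if h : i < k + 1 then n ⟨i, h⟩ else 0) ω)
        (Filter.pi fun _ => atTop) (fun _ => θstar k) from fun k _ hk => H k hk
  intro k
  induction k using Nat.strong_induction_on with
  | _ k IH =>
    match k with
    | 0 =>
      intro _
      refine my_tendstoInMeasure_congr (f := fun (n : Fin 1 → ℕ) ω => θhat0 (n 0) ω)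
        (fun n ω => ?_) (my_tendstoInMeasure_comp h1 (tendsto_eval_pi (fun _ : Fin 1 => atTop) 0))
      rw [smleEstimator_zero]
      simp
    | k+1 =>
      intro hkK
      set c := π (k+1) (fun i : Fin (k+1) => θstar ↑i) with hc
      set ext : (Fin (k+2) → ℕ) → ℕ → ℕ :=
        fun n i => if h : i < k+2 then n ⟨i, h⟩ else 0 with hext
      -- Step A: convergence of each earlier-block estimator along the big filter
      have hblock : ∀ i : Fin (k+1), TendstoInMeasure P
          (fun (n : Fin (k+2) → ℕ) ω => smleEstimator p q π θhat0 θhat i (ext n) ω)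
          (Filter.pi fun _ => atTop) (fun _ => θstar i) := by
        intro i
        have hiK : (i : ℕ) < K := lt_trans i.isLt hkK
        have hIH := IH i i.isLt hiK
        have hr : Tendsto
            (fun (n : Fin (k+2) → ℕ) (j : Fin (i+1)) => n ⟨j, lt_trans j.isLt
              (Nat.lt_succ_of_le (Nat.succ_le_of_lt i.isLt))⟩)
            (Filter.pi fun _ : Fin (k+2) => atTop) (Filter.pi fun _ : Fin (i+1) => atTop) := by
          rw [Filter.tendsto_pi]
          intro j
          exact tendsto_eval_pi _ _
        refine my_tendstoInMeasure_congr (fun n ω => ?_) (my_tendstoInMeasure_comp hIH hr)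
        refine smleEstimator_congr p q π θhat0 θhat i _ _ ω fun j hj => ?_
        have hj1 : j < (i : ℕ) + 1 := Nat.lt_succ_of_le hj
        have hj2 : j < k + 2 := lt_trans hj1 (Nat.lt_succ_of_le (Nat.succ_le_of_lt i.isLt))
        simp only [hext, dif_pos hj1, dif_pos hj2]
      -- the plugged-in nuisance estimate converges to c
      have hη : TendstoInMeasure P
          (fun (n : Fin (k+2) → ℕ) ω =>
            π (k+1) (fun i : Fin (k+1) => smleEstimator p q π θhat0 θhat i (ext n) ω))
          (Filter.pi fun _ => atTop) (fun _ => c) :=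
        my_tendstoInMeasure_clm (π (k+1)) (my_tendstoInMeasure_pi hblock)
      -- Step B
      obtain ⟨n₀, δ, hδ, B, hB, hdiff⟩ := h3 (k+1) (Nat.le_add_left 1 k) hkK
      rw [tendstoInMeasure_iff_dist]
      intro ε hε
      set δ' : ℝ := min δ (ε / (2 * (B + 1))) with hδ'def
      have hδ' : 0 < δ' := lt_min hδ (by positivity)
      have hlast : (k+1 : ℕ) < k+2 := Nat.lt_succ_self _
      have hεhalf : (0:ℝ) < ε / 2 := half_pos hε
      have htendT := tendstoInMeasure_iff_dist.1 hη δ' hδ'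
      have htendU : Tendsto (fun n : Fin (k+2) → ℕ =>
          P {ω | ε/2 ≤ dist (θhat (k+1) (n ⟨k+1, hlast⟩) (ω, c)) (θstar (k+1))})
          (Filter.pi fun _ => atTop) (nhds 0) := by
        have h := tendstoInMeasure_iff_dist.1 (h2 (k+1) (Nat.le_add_left 1 k) hkK) (ε/2) hεhalf
        exact h.comp (tendsto_eval_pi (fun _ : Fin (k+2) => atTop) ⟨k+1, hlast⟩)
      refine tendsto_of_tendsto_of_tendsto_of_le_of_le' tendsto_const_nhds
        (h := fun n : Fin (k+2) → ℕ =>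
          P {ω | δ' ≤ dist (π (k+1)
              (fun i : Fin (k+1) => smleEstimator p q π θhat0 θhat i (ext n) ω)) c}
          + P {ω | ε/2 ≤ dist (θhat (k+1) (n ⟨k+1, hlast⟩) (ω, c)) (θstar (k+1))})
        (by simpa using htendT.add htendU)
        (Eventually.of_forall fun n => zero_le) ?_
      have hev : ∀ᶠ n : Fin (k+2) → ℕ in Filter.pi fun _ => atTop, n₀ < n ⟨k+1, hlast⟩ :=
        (tendsto_eval_pi (fun _ : Fin (k+2) => atTop) ⟨k+1, hlast⟩).eventually
          (eventually_gt_atTop n₀)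
      refine hev.mono fun n hn => ?_
      -- notation
      set m : ℕ := n ⟨k+1, hlast⟩ with hm
      have hextlast : ext n (k+1) = m := by simp only [hext, dif_pos hlast]; rfl
      set ηh : Ω → EuclideanSpace ℝ (Fin (q (k+1))) :=
        fun ω => π (k+1) (fun i : Fin (k+1) => smleEstimator p q π θhat0 θhat i (ext n) ω)
        with hηh
      have hGood := hdiff m hn
      set Φ : Ω → Prop := fun ω => ∀ η ∈ Metric.ball c δ,
        ∃ D : EuclideanSpace ℝ (Fin (q (k+1))) →L[ℝ] EuclideanSpace ℝ (Fin (p (k+1))),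
          HasFDerivAt (fun η' => θhat (k+1) m (ω, η')) D η ∧ ‖D‖ ≤ B with hΦ
      have hnull : P {ω | ¬ Φ ω} = 0 := by
        rw [← ae_iff]
        exact hGood
      have hsub : {ω | ε ≤ dist (smleEstimator p q π θhat0 θhat (k+1)
            (fun i => if h : i < k+1+1 then n ⟨i, h⟩ else 0) ω) (θstar (k+1))}
          ⊆ ({ω | δ' ≤ dist (ηh ω) c}
            ∪ {ω | ε/2 ≤ dist (θhat (k+1) m (ω, c)) (θstar (k+1))}) ∪ {ω | ¬ Φ ω} := by
        intro ω hω
        simp only [Set.mem_setOf_eq] at hω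
        rw [smleEstimator_succ,
          show (fun i => if h : i < k+1+1 then n ⟨i, h⟩ else 0) = ext n from rfl,
          dif_pos hlast, ← hm] at hω
        by_cases hΦω : Φ ω
        · left
          by_cases hT : δ' ≤ dist (ηh ω) c
          · exact Or.inl hT
          · right
            push_neg at hT
            -- mean value estimate
            by_contra hU
            simp only [Set.mem_setOf_eq] at hU
            push_neg at hU
            classical
            set f' : EuclideanSpace ℝ (Fin (q (k+1))) →
                (EuclideanSpace ℝ (Fin (q (k+1))) →L[ℝ] EuclideanSpace ℝ (Fin (p (k+1)))) :=
              fun η => if h : η ∈ Metric.ball c δ then (hΦω η h).choose else 0 with hf'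
            have hderiv : ∀ x ∈ Metric.ball c δ,
                HasFDerivWithinAt (fun η' => θhat (k+1) m (ω, η')) (f' x)
                  (Metric.ball c δ) x := by
              intro x hx
              simp only [hf', dif_pos hx]
              exact (hΦω x hx).choose_spec.1.hasFDerivWithinAt
            have hbd : ∀ x ∈ Metric.ball c δ, ‖f' x‖ ≤ B := by
              intro x hx
              simp only [hf', dif_pos hx]
              exact (hΦω x hx).choose_spec.2
            have hmemc : c ∈ Metric.ball c δ := Metric.mem_ball_self hδ
            have hmemη : ηh ω ∈ Metric.ball c δ :=
              Metric.mem_ball.2 (lt_of_lt_of_le hT (min_le_left _ _))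
            have hmvt := Convex.norm_image_sub_le_of_norm_hasFDerivWithin_le
              hderiv hbd (convex_ball c δ) hmemc hmemη
            -- hmvt : ‖θhat _ m (ω, ηh ω) - θhat _ m (ω, c)‖ ≤ B * ‖ηh ω - c‖
            have hd1 : dist (θhat (k+1) m (ω, ηh ω)) (θhat (k+1) m (ω, c)) ≤ B * dist (ηh ω) c := by
              rw [dist_eq_norm, dist_eq_norm]
              exact hmvt
            have hBd : B * dist (ηh ω) c ≤ ε / 2 := by
              have h1 : dist (ηh ω) c ≤ ε / (2 * (B + 1)) :=
                le_trans hT.le (min_le_right _ _)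
              have h2 : B * dist (ηh ω) c ≤ B * (ε / (2 * (B + 1))) :=
                mul_le_mul_of_nonneg_left h1 hB
              have h3 : B * (ε / (2 * (B + 1))) ≤ ε / 2 := by
                rw [← mul_div_assoc, div_le_div_iff₀ (by positivity) (by norm_num : (0:ℝ) < 2)]
                nlinarith [hε.le]
              linarith
            have := dist_triangle (θhat (k+1) m (ω, ηh ω)) (θhat (k+1) m (ω, c)) (θstar (k+1))
            have : dist (θhat (k+1) m (ω, ηh ω)) (θstar (k+1)) < ε := by
              calc dist (θhat (k+1) m (ω, ηh ω)) (θstar (k+1))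
                  ≤ dist (θhat (k+1) m (ω, ηh ω)) (θhat (k+1) m (ω, c))
                    + dist (θhat (k+1) m (ω, c)) (θstar (k+1)) := dist_triangle _ _ _
                _ < ε/2 + ε/2 := add_lt_add_of_le_of_lt (hd1.trans hBd) hU
                _ = ε := by ring
            exact absurd hω (not_le.2 this)
        · exact Or.inr hΦω
      calc P {ω | ε ≤ dist (smleEstimator p q π θhat0 θhat (k+1)
              (fun i => if h : i < k+1+1 then n ⟨i, h⟩ else 0) ω) (θstar (k+1))}
          ≤ P (({ω | δ' ≤ dist (ηh ω) c}
              ∪ {ω | ε/2 ≤ dist (θhat (k+1) m (ω, c)) (θstar (k+1))}) ∪ {ω | ¬ Φ ω}) :=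
            measure_mono hsub
        _ ≤ P ({ω | δ' ≤ dist (ηh ω) c}
              ∪ {ω | ε/2 ≤ dist (θhat (k+1) m (ω, c)) (θstar (k+1))}) + P {ω | ¬ Φ ω} :=
            measure_union_le _ _
        _ = P ({ω | δ' ≤ dist (ηh ω) c}
              ∪ {ω | ε/2 ≤ dist (θhat (k+1) m (ω, c)) (θstar (k+1))}) := by
            rw [hnull, add_zero]
        _ ≤ P {ω | δ' ≤ dist (ηh ω) c}
              + P {ω | ε/2 ≤ dist (θhat (k+1) m (ω, c)) (θstar (k+1))} := measure_union_le _ _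
end

section
/- (Plug-in consistency: the inductive step of the SMLE consistency theorem, derivative-bound version.) Let (Ω, 𝓕, P) be a probability space, p, q positive integers, η* ∈ ℝ^q and θ* ∈ ℝ^p. Let η̂ : ℕ → Ω → ℝ^q be measurable and θ̂ : ℕ → Ω × ℝ^q → ℝ^p be jointly measurable. Assume: (i) η̂_m converges in probability to η* along atTop in m; (ii) θ̂_n(·, η*) converges in probability to θ* along atTop in n; (iii) there exist n_0 ∈ ℕ, δ > 0 and B ≥ 0 such that for every n > n_0, for P-almost every ω, the map η ↦ θ̂_n(ω, η) is Fréchet differentiable at every point of the open ball of radius δ centered at η*, with derivative of operator norm at most B on that ball. Then the plug-in estimator (n, m, ω) ↦ θ̂_n(ω, η̂_m(ω)) converges in probability to θ* along the product filter atTop ×ˢ atTop on ℕ × ℕ. -/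
open MeasureTheory Filter Topology

/-- **Plug-in consistency** (inductive step of the SMLE consistency theorem,
derivative-bound version).  If `η̂ₘ` is consistent for `η*`, `θ̂ₙ(·, η*)` is consistent
for `θ*`, and for all large `n` the map `η ↦ θ̂ₙ(ω, η)` is a.s. differentiable with
uniformly bounded derivative on a ball around `η*`, then the plug-in estimator
`θ̂ₙ(·, η̂ₘ(·))` is consistent for `θ*` as `n, m → ∞` jointly. -/
theorem plugin_consistency_deriv
    {Ω : Type*} [MeasurableSpace Ω] (P : Measure Ω) [IsProbabilityMeasure P]
    (p q : ℕ) (hp : 0 < p) (hq : 0 < q)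
    (ηstar : EuclideanSpace ℝ (Fin q)) (θstar : EuclideanSpace ℝ (Fin p))
    (ηhat : ℕ → Ω → EuclideanSpace ℝ (Fin q))
    (θhat : ℕ → Ω × EuclideanSpace ℝ (Fin q) → EuclideanSpace ℝ (Fin p))
    (hηmeas : ∀ m, Measurable (ηhat m))
    (hθmeas : ∀ n, Measurable (θhat n))
    (hi : TendstoInMeasure P (fun m ω => ηhat m ω) atTop (fun _ => ηstar))
    (hii : TendstoInMeasure P (fun n ω => θhat n (ω, ηstar)) atTop (fun _ => θstar))
    (hiii : ∃ n₀ : ℕ, ∃ δ > (0 : ℝ), ∃ B : ℝ, 0 ≤ B ∧ ∀ n > n₀,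
      ∀ᵐ ω ∂P, ∀ η ∈ Metric.ball ηstar δ,
        ∃ D : EuclideanSpace ℝ (Fin q) →L[ℝ] EuclideanSpace ℝ (Fin p),
          HasFDerivAt (fun η' => θhat n (ω, η')) D η ∧ ‖D‖ ≤ B) :
    TendstoInMeasure P (fun nm : ℕ × ℕ => fun ω => θhat nm.1 (ω, ηhat nm.2 ω))
      (atTop ×ˢ atTop) (fun _ => θstar) := by
  rw [tendstoInMeasure_iff_dist] at hi hii ⊢
  intro ε hε
  obtain ⟨n₀, δ, hδ, B, hB, hdiff⟩ := hiii
  set ε₁ : ℝ := min (δ / 2) (ε / (2 * (B + 1))) with hε₁def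
  have hε₁ : 0 < ε₁ := lt_min (by linarith) (by positivity)
  have key : ∀ᶠ nm : ℕ × ℕ in atTop ×ˢ atTop,
      P {ω | ε ≤ dist (θhat nm.1 (ω, ηhat nm.2 ω)) θstar}
        ≤ P {ω | ε / 2 ≤ dist (θhat nm.1 (ω, ηstar)) θstar}
          + P {ω | ε₁ ≤ dist (ηhat nm.2 ω) ηstar} := by
    filter_upwards [(eventually_gt_atTop n₀).prod_inl atTop] with nm hn
    refine le_trans (measure_mono_ae ?_) (measure_union_le _ _)
    filter_upwards [hdiff nm.1 hn] with ω hω hbad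
    rw [show (({ω | ε / 2 ≤ dist (θhat nm.1 (ω, ηstar)) θstar} ∪ {ω | ε₁ ≤ dist (ηhat nm.2 ω) ηstar}) ω) = (ω ∈ {ω | ε / 2 ≤ dist (θhat nm.1 (ω, ηstar)) θstar} ∪ {ω | ε₁ ≤ dist (ηhat nm.2 ω) ηstar}) from rfl]
    by_contra hc
    simp only [Set.mem_union, Set.mem_setOf_eq, not_or, not_le] at hc
    obtain ⟨h1, h2⟩ := hc
    choose D hD hDB using hω
    classical
    set f' : EuclideanSpace ℝ (Fin q) → (EuclideanSpace ℝ (Fin q) →L[ℝ] EuclideanSpace ℝ (Fin p)) :=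
      fun η => if h : η ∈ Metric.ball ηstar δ then D η h else 0 with hf'
    have hmem : ηhat nm.2 ω ∈ Metric.ball ηstar δ := by
      have : dist (ηhat nm.2 ω) ηstar < δ / 2 := lt_of_lt_of_le h2 (min_le_left _ _)
      exact Metric.mem_ball.2 (by linarith)
    have hmem' : ηstar ∈ Metric.ball ηstar δ := Metric.mem_ball_self hδ
    have hmvt : ‖θhat nm.1 (ω, ηhat nm.2 ω) - θhat nm.1 (ω, ηstar)‖
        ≤ B * ‖ηhat nm.2 ω - ηstar‖ := by
      refine Convex.norm_image_sub_le_of_norm_hasFDerivWithin_le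
        (f := fun η' => θhat nm.1 (ω, η')) (f' := f')
        (fun x hx => ?_) (fun x hx => ?_) (convex_ball _ _) hmem' hmem
      · simp only [hf', dif_pos hx]
        exact (hD x hx).hasFDerivWithinAt
      · simp only [hf', dif_pos hx]
        exact hDB x hx
    have hsmall : B * ‖ηhat nm.2 ω - ηstar‖ ≤ ε / 2 := by
      have h2' : ‖ηhat nm.2 ω - ηstar‖ ≤ ε / (2 * (B + 1)) := by
        rw [← dist_eq_norm]
        exact le_of_lt (lt_of_lt_of_le h2 (min_le_right _ _))
      calc B * ‖ηhat nm.2 ω - ηstar‖ ≤ B * (ε / (2 * (B + 1))) := by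
            exact mul_le_mul_of_nonneg_left h2' hB
        _ ≤ (B + 1) * (ε / (2 * (B + 1))) := by
            apply mul_le_mul_of_nonneg_right (by linarith) (by positivity)
        _ = ε / 2 := by field_simp
    have : dist (θhat nm.1 (ω, ηhat nm.2 ω)) θstar < ε := by
      calc dist (θhat nm.1 (ω, ηhat nm.2 ω)) θstar
          ≤ dist (θhat nm.1 (ω, ηhat nm.2 ω)) (θhat nm.1 (ω, ηstar))
            + dist (θhat nm.1 (ω, ηstar)) θstar := dist_triangle _ _ _
        _ < ε / 2 + ε / 2 := by
            rw [dist_eq_norm]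
            exact add_lt_add_of_le_of_lt (hmvt.trans hsmall) h1
        _ = ε := by ring
    exact absurd hbad (not_le.2 this)
  have hsum : Tendsto (fun nm : ℕ × ℕ =>
      P {ω | ε / 2 ≤ dist (θhat nm.1 (ω, ηstar)) θstar}
        + P {ω | ε₁ ≤ dist (ηhat nm.2 ω) ηstar}) (atTop ×ˢ atTop) (𝓝 0) := by
    have h1 : Tendsto (fun nm : ℕ × ℕ => P {ω | ε / 2 ≤ dist (θhat nm.1 (ω, ηstar)) θstar})
        (atTop ×ˢ atTop) (𝓝 0) := (hii (ε / 2) (by linarith)).comp tendsto_fst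
    have h2 : Tendsto (fun nm : ℕ × ℕ => P {ω | ε₁ ≤ dist (ηhat nm.2 ω) ηstar})
        (atTop ×ˢ atTop) (𝓝 0) := (hi ε₁ hε₁).comp tendsto_snd
    simpa using h1.add h2
  exact tendsto_of_tendsto_of_tendsto_of_le_of_le' tendsto_const_nhds hsum
    (Eventually.of_forall fun _ => zero_le) key
end

section
/- (Plug-in consistency, Lipschitz version.) Let (Ω, 𝓕, P) be a probability space, p, q positive integers, η* ∈ ℝ^q and θ* ∈ ℝ^p. Let η̂ : ℕ → Ω → ℝ^q be measurable and θ̂ : ℕ → Ω × ℝ^q → ℝ^p be jointly measurable. Assume: (i) η̂_m converges in probability to η* along atTop in m; (ii) θ̂_n(·, η*) converges in probability to θ* along atTop in n; (iii) there exist n_0 ∈ ℕ, δ > 0 and B ≥ 0 such that for every n > n_0, for P-almost every ω, the map η ↦ θ̂_n(ω, η) is Lipschitz with constant B on the open ball of radius δ centered at η*. Then the plug-in estimator (n, m, ω) ↦ θ̂_n(ω, η̂_m(ω)) converges in probability to θ* along the product filter atTop ×ˢ atTop on ℕ × ℕ. -/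
open MeasureTheory Filter

/-- **Plug-in consistency** (Lipschitz version).  If `η̂ₘ` is consistent for `η*`,
`θ̂ₙ(·, η*)` is consistent for `θ*`, and for all large `n` the map `η ↦ θ̂ₙ(ω, η)`
is a.s. Lipschitz with a uniform constant on a ball around `η*`, then the plug-in
estimator `θ̂ₙ(·, η̂ₘ(·))` is consistent for `θ*` as `n, m → ∞` jointly. -/
theorem plugin_consistency_lipschitz
    {Ω : Type*} [MeasurableSpace Ω] (P : Measure Ω) [IsProbabilityMeasure P]
    (p q : ℕ) (hp : 0 < p) (hq : 0 < q)
    (ηstar : EuclideanSpace ℝ (Fin q)) (θstar : EuclideanSpace ℝ (Fin p))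
    (ηhat : ℕ → Ω → EuclideanSpace ℝ (Fin q))
    (θhat : ℕ → Ω × EuclideanSpace ℝ (Fin q) → EuclideanSpace ℝ (Fin p))
    (hηmeas : ∀ m, Measurable (ηhat m))
    (hθmeas : ∀ n, Measurable (θhat n))
    (hi : TendstoInMeasure P (fun m ω => ηhat m ω) atTop (fun _ => ηstar))
    (hii : TendstoInMeasure P (fun n ω => θhat n (ω, ηstar)) atTop (fun _ => θstar))
    (hiii : ∃ n₀ : ℕ, ∃ δ > (0 : ℝ), ∃ B : NNReal, ∀ n > n₀,
      ∀ᵐ ω ∂P, LipschitzOnWith B (fun η => θhat n (ω, η)) (Metric.ball ηstar δ)) :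
    TendstoInMeasure P (fun nm : ℕ × ℕ => fun ω => θhat nm.1 (ω, ηhat nm.2 ω))
      (atTop ×ˢ atTop) (fun _ => θstar) := by
  obtain ⟨n₀, δ, hδ, B, hLip⟩ := hiii
  rw [tendstoInMeasure_iff_dist] at hi hii ⊢
  intro ε hε
  have hBpos : (0:ℝ) < (B:ℝ) + 1 := by positivity
  set ε₁ : ℝ := min (δ/2) (ε/(2*((B:ℝ)+1))) with hε₁def
  have hε₁pos : 0 < ε₁ := lt_min (by positivity) (by positivity)
  have h1 := hi ε₁ hε₁pos
  have h2 := hii (ε/2) (by positivity)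
  have key : ∀ n > n₀, ∀ m,
      P {ω | ε ≤ dist (θhat n (ω, ηhat m ω)) θstar}
        ≤ P {ω | ε₁ ≤ dist (ηhat m ω) ηstar}
          + P {ω | ε/2 ≤ dist (θhat n (ω, ηstar)) θstar} := by
    intro n hn m
    have hae := hLip n hn
    rw [ae_iff] at hae
    have hsub : {ω | ε ≤ dist (θhat n (ω, ηhat m ω)) θstar} ⊆
        {ω | ¬ LipschitzOnWith B (fun η => θhat n (ω, η)) (Metric.ball ηstar δ)}
          ∪ ({ω | ε₁ ≤ dist (ηhat m ω) ηstar}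
            ∪ {ω | ε/2 ≤ dist (θhat n (ω, ηstar)) θstar}) := by
      intro ω hω
      simp only [Set.mem_union, Set.mem_setOf_eq] at *
      by_contra hc
      push_neg at hc
      obtain ⟨hL, hd1, hd2⟩ := hc
      have hmem : ηhat m ω ∈ Metric.ball ηstar δ := by
        rw [Metric.mem_ball]
        have := min_le_left (δ/2) (ε/(2*((B:ℝ)+1)))
        linarith
      have hlip := hL.dist_le_mul (ηhat m ω) hmem ηstar (Metric.mem_ball_self hδ)
      have hε₁le : ε₁ ≤ ε/(2*((B:ℝ)+1)) := min_le_right _ _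
      have hB : (B:ℝ) * dist (ηhat m ω) ηstar < ε/2 := by
        have h3 : (B:ℝ) * dist (ηhat m ω) ηstar ≤ (B:ℝ) * ε₁ :=
          mul_le_mul_of_nonneg_left hd1.le B.coe_nonneg
        have h4 : (B:ℝ) * ε₁ ≤ (B:ℝ) * (ε/(2*((B:ℝ)+1))) :=
          mul_le_mul_of_nonneg_left hε₁le B.coe_nonneg
        have h5 : (B:ℝ) * (ε/(2*((B:ℝ)+1))) < ε/2 := by
          rw [mul_div_assoc', div_lt_div_iff₀ (by positivity) (by norm_num : (0:ℝ) < 2)]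
          nlinarith [B.coe_nonneg]
        linarith
      have htri := dist_triangle (θhat n (ω, ηhat m ω)) (θhat n (ω, ηstar)) θstar
      have : dist (θhat n (ω, ηhat m ω)) (θhat n (ω, ηstar)) < ε/2 :=
        lt_of_le_of_lt hlip hB
      linarith
    calc P {ω | ε ≤ dist (θhat n (ω, ηhat m ω)) θstar}
        ≤ P ({ω | ¬ LipschitzOnWith B (fun η => θhat n (ω, η)) (Metric.ball ηstar δ)}
          ∪ ({ω | ε₁ ≤ dist (ηhat m ω) ηstar}
            ∪ {ω | ε/2 ≤ dist (θhat n (ω, ηstar)) θstar})) := measure_mono hsub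
      _ ≤ P {ω | ¬ LipschitzOnWith B (fun η => θhat n (ω, η)) (Metric.ball ηstar δ)}
          + P ({ω | ε₁ ≤ dist (ηhat m ω) ηstar}
            ∪ {ω | ε/2 ≤ dist (θhat n (ω, ηstar)) θstar}) := measure_union_le _ _
      _ = P ({ω | ε₁ ≤ dist (ηhat m ω) ηstar}
            ∪ {ω | ε/2 ≤ dist (θhat n (ω, ηstar)) θstar}) := by rw [hae, zero_add]
      _ ≤ _ := measure_union_le _ _
  have hT : Tendsto (fun nm : ℕ × ℕ =>
      P {ω | ε₁ ≤ dist (ηhat nm.2 ω) ηstar}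
        + P {ω | ε/2 ≤ dist (θhat nm.1 (ω, ηstar)) θstar})
      (atTop ×ˢ atTop) (nhds 0) := by
    have := (h1.comp (tendsto_snd : Tendsto (Prod.snd : ℕ × ℕ → ℕ) (atTop ×ˢ atTop) atTop)).add
      (h2.comp (tendsto_fst : Tendsto (Prod.fst : ℕ × ℕ → ℕ) (atTop ×ˢ atTop) atTop))
    simpa using this
  apply tendsto_of_tendsto_of_tendsto_of_le_of_le' tendsto_const_nhds hT
  · exact Eventually.of_forall fun _ => zero_le
  · filter_upwards [(eventually_gt_atTop n₀).prod_inl atTop] with nm hn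
    exact key nm.1 hn nm.2
end
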